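/- Let α > 0 and 0 < γ < 1. If A ⊆ ℕ is a C-set, i.e. A belongs to some idempotent ultrafilter on ℕ every member of which is a J-set, then g_{α,γ}[A] = {⌊αn + γ⌋ : n ∈ A} is a C-set. -/

import Mathlib

/-- The nonhomogeneous spectrum map `g_{α,γ}(n) = ⌊α n + γ⌋`. -/
noncomputable def spectrumMap (α γ : ℝ) (n : ℕ) : ℕ := ⌊α * n + γ⌋₊

/-- `B ⊆ ℕ` is a J-set. -/
def JSet (B : Set ℕ) : Prop :=
  ∀ F : Finset (ℕ → ℕ), F.Nonempty →
    ∃ (a : ℕ) (H : Finset ℕ), H.Nonempty ∧ ∀ f ∈ F, a + ∑ n ∈ H, f n ∈ B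

/-- The ultrafilter sum: `A ∈ usum p q ↔ {x : {y : x + y ∈ A} ∈ q} ∈ p`. -/
def usum (p q : Ultrafilter ℕ) : Ultrafilter ℕ :=
  p.bind fun x => q.map fun y => x + y

/-- `A ⊆ ℕ` is a C-set: a member of some idempotent ultrafilter all of whose
members are J-sets. -/
def CSet (A : Set ℕ) : Prop :=
  ∃ p : Ultrafilter ℕ, usum p p = p ∧ (∀ B ∈ p, JSet B) ∧ A ∈ p

lemma mem_usum {p q : Ultrafilter ℕ} {S : Set ℕ} :
    S ∈ usum p q ↔ {x | {y | x + y ∈ S} ∈ q} ∈ p := Iff.rfl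

lemma star_mem {p : Ultrafilter ℕ} (hp : usum p p = p) {S : Set ℕ} (hS : S ∈ p) :
    {m | {n | m + n ∈ S} ∈ p} ∈ p := by
  rw [← hp] at hS
  exact mem_usum.mp hS

lemma spectrumMap_real (α γ : ℝ) (hα : 0 < α) (hγ : 0 < γ) (b : ℕ) :
    (spectrumMap α γ b : ℝ) = α * b + γ - Int.fract (α * b + γ) := by
  have h0 : (0:ℝ) ≤ α * b + γ := by positivity
  rw [spectrumMap, natCast_floor_eq_intCast_floor h0, ← Int.self_sub_fract]

/-- The window set: naturals whose `fract (α b + γ)` is within `δ` of `γ`. -/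
def Wset (α γ δ : ℝ) : Set ℕ :=
  {b | γ - δ ≤ Int.fract (α * b + γ) ∧ Int.fract (α * b + γ) < γ + δ}

/-- If `fract (α b)` is small, then `b` is in the window. -/
lemma mem_Wset_of_fract_small (α γ δ : ℝ) (hδ0 : 0 < δ) (hγ0 : 0 < γ) (hδγ' : δ ≤ 1 - γ)
    (b : ℕ) (hb : Int.fract (α * b) < δ) : b ∈ Wset α γ δ := by
  have h1 : Int.fract (α * b + γ) = Int.fract (α * b) + γ := by
    have : α * b + γ = (⌊α * b⌋ : ℝ) + (Int.fract (α * b) + γ) := by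
      rw [← add_assoc, Int.floor_add_fract]
    rw [this, Int.fract_intCast_add, Int.fract_eq_self.2
      ⟨by linarith [Int.fract_nonneg (α * b)], by linarith [Int.fract_nonneg (α * b)]⟩]
  constructor
  · rw [h1]; linarith [Int.fract_nonneg (α * b)]
  · rw [h1]; linarith

/-- If `fract (α b)` is close to 1, then `b` is in the window. -/
lemma mem_Wset_of_fract_large (α γ δ : ℝ) (hδ0 : 0 < δ) (hγ1 : γ < 1) (hδγ : δ ≤ γ)
    (b : ℕ) (hb : 1 - δ ≤ Int.fract (α * b)) : b ∈ Wset α γ δ := by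
  have hlt := Int.fract_lt_one (α * b)
  have h1 : Int.fract (α * b + γ) = Int.fract (α * b) + γ - 1 := by
    have : α * b + γ = ((⌊α * b⌋ + 1 : ℤ) : ℝ) + (Int.fract (α * b) + γ - 1) := by
      push_cast
      linarith [Int.floor_add_fract (α * b)]
    rw [this, Int.fract_intCast_add, Int.fract_eq_self.2 ⟨by linarith, by linarith⟩]
  constructor
  · rw [h1]; linarith
  · rw [h1]; linarith

lemma Wset_mem (α γ : ℝ) (hα : 0 < α) (hγ0 : 0 < γ) (hγ1 : γ < 1)
    (p : Ultrafilter ℕ) (hp : usum p p = p) (δ : ℝ) (hδ0 : 0 < δ)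
    (hδγ : δ ≤ γ) (hδγ' : δ ≤ 1 - γ) : Wset α γ δ ∈ p := by
  classical
  set N : ℕ := ⌈1/δ⌉₊ with hN
  have hN0 : 0 < N := Nat.ceil_pos.2 (by positivity)
  have hNR : (0:ℝ) < N := by exact_mod_cast hN0
  have hNδ : 1 / (N:ℝ) ≤ δ := by
    rw [div_le_iff₀ hNR]
    have h1 : 1/δ ≤ (N:ℝ) := Nat.le_ceil _
    calc (1:ℝ) = δ * (1/δ) := by field_simp
    _ ≤ δ * N := by nlinarith
  set Aj : ℕ → Set ℕ := fun j => {n | (j:ℝ)/N ≤ Int.fract (α * n) ∧ Int.fract (α * n) < (j+1)/N}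
    with hAjdef
  -- some Aj with j < N is in p
  have hcover : (⋃ j ∈ Set.Iio N, Aj j) ∈ p := by
    have : (⋃ j ∈ Set.Iio N, Aj j) = Set.univ := by
      ext n
      simp only [Set.mem_iUnion, Set.mem_univ, iff_true]
      set x := Int.fract (α * n) with hx
      have hx0 : 0 ≤ x := Int.fract_nonneg _
      have hx1 : x < 1 := Int.fract_lt_one _
      refine ⟨⌊x * N⌋₊, ?_, ?_, ?_⟩
      · have : x * N < N := by nlinarith
        exact Set.mem_Iio.2 (by exact_mod_cast (Nat.floor_lt (by positivity)).2 this)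
      · rw [div_le_iff₀ hNR]
        exact Nat.floor_le (by positivity)
      · rw [lt_div_iff₀ hNR]
        push_cast
        exact Nat.lt_floor_add_one _
    rw [this]; exact Filter.univ_mem
  rw [Ultrafilter.finite_biUnion_mem_iff (Set.finite_Iio N)] at hcover
  obtain ⟨j, hjN, hAj⟩ := hcover
  rw [Set.mem_Iio] at hjN
  -- Galvin argument producing m, n, m+n all in Aj j
  have hstar := star_mem hp hAj
  obtain ⟨m, hmA, hmstar⟩ := Filter.nonempty_of_mem (Filter.inter_mem hAj hstar)
  obtain ⟨n, hnA, hmn⟩ := Filter.nonempty_of_mem (Filter.inter_mem hAj hmstar)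
  -- fractional part bookkeeping
  set x := Int.fract (α * m) with hxdef
  set y := Int.fract (α * n) with hydef
  set z := Int.fract (α * (m + n : ℕ)) with hzdef
  have hxb : (j:ℝ)/N ≤ x ∧ x < (j+1)/N := hmA
  have hyb : (j:ℝ)/N ≤ y ∧ y < (j+1)/N := hnA
  have hzb : (j:ℝ)/N ≤ z ∧ z < (j+1)/N := hmn
  have hsplit : α * ((m + n : ℕ) : ℝ) = α * m + α * n := by push_cast; ring
  have hk : ∃ k : ℤ, (k:ℝ) = x + y - z := by
    have hz' : z = Int.fract (α * (m:ℝ) + α * (n:ℝ)) := by rw [hzdef, hsplit]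
    refine ⟨⌊α * (m:ℝ) + α * (n:ℝ)⌋ - ⌊α * (m:ℝ)⌋ - ⌊α * (n:ℝ)⌋, ?_⟩
    have h1 := Int.floor_add_fract (α * (m:ℝ) + α * (n:ℝ))
    have h2 := Int.floor_add_fract (α * (m:ℝ))
    have h3 := Int.floor_add_fract (α * (n:ℝ))
    rw [hz', hxdef, hydef]
    push_cast
    linarith
  obtain ⟨k, hkeq⟩ := hk
  have hx0 : 0 ≤ x := Int.fract_nonneg _
  have hy0 : 0 ≤ y := Int.fract_nonneg _
  have hz0 : 0 ≤ z := Int.fract_nonneg _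
  have hx1 : x < 1 := Int.fract_lt_one _
  have hy1 : y < 1 := Int.fract_lt_one _
  have hz1 : z < 1 := Int.fract_lt_one _
  have hk01 : k = 0 ∨ k = 1 := by
    have h1 : (-1:ℝ) < k := by linarith
    have h2 : (k:ℝ) < 2 := by linarith
    have h1' : (-1:ℤ) < k := by exact_mod_cast h1
    have h2' : k < 2 := by exact_mod_cast h2
    omega
  -- conclude j = 0 or j = N - 1
  have hj : j = 0 ∨ j = N - 1 := by
    rcases hk01 with h | h
    · left
      subst h
      -- z = x + y
      have hz : z = x + y := by push_cast at hkeq; linarith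
      by_contra hj0
      have hj1 : 1 ≤ j := Nat.one_le_iff_ne_zero.2 hj0
      have hj1' : (1:ℝ) ≤ (j:ℝ) := by exact_mod_cast hj1
      have : (2*j:ℝ)/N ≤ z := by
        rw [hz]
        have := hxb.1; have := hyb.1
        rw [div_le_iff₀ hNR] at *
        push_cast
        nlinarith [hxb.1, hyb.1, hNR]
      have h2 : (2*j:ℝ)/N < (j+1)/N := lt_of_le_of_lt this hzb.2
      rw [div_lt_div_iff₀ hNR hNR] at h2
      nlinarith
    · right
      subst h
      -- x + y = z + 1
      have hz : x + y = z + 1 := by push_cast at hkeq; linarith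
      have h1 : 1 + (j:ℝ)/N ≤ x + y := by linarith [hzb.1]
      have h2 : x + y < 2*((j+1)/N) := by linarith [hxb.2, hyb.2]
      have h3 : 1 + (j:ℝ)/N < 2*((j+1)/N) := lt_of_le_of_lt h1 h2
      have h4 : (N:ℝ) + (j:ℝ) < 2*((j:ℝ)+1) := by
        have h := mul_lt_mul_of_pos_right h3 hNR
        have e1 : (1 + (j:ℝ)/N) * N = N + j := by field_simp
        have e2 : (2*(((j:ℝ)+1)/N)) * N = 2*((j:ℝ)+1) := by field_simp
        rw [e1, e2] at h
        exact h
      have h5' : (N:ℝ) < (j:ℝ) + 2 := by linarith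
      have h5 : N < j + 2 := by exact_mod_cast h5'
      omega
  -- in either case, Aj j ⊆ Wset
  refine p.toFilter.mem_of_superset hAj ?_
  rcases hj with rfl | rfl
  · intro b hb
    refine mem_Wset_of_fract_small α γ δ hδ0 hγ0 hδγ' b ?_
    have := hb.2
    simp only [Nat.cast_zero, zero_add] at this
    calc Int.fract (α * b) < 1/N := this
    _ ≤ δ := hNδ
  · intro b hb
    refine mem_Wset_of_fract_large α γ δ hδ0 hγ1 hδγ b ?_
    have h1 := hb.1
    have hNN : ((N - 1 : ℕ) : ℝ) = (N:ℝ) - 1 := by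
      push_cast [Nat.cast_sub hN0]; ring
    rw [hNN] at h1
    have : 1 - 1/(N:ℝ) ≤ Int.fract (α * b) := by
      have e : 1 - 1/(N:ℝ) = ((N:ℝ)-1)/N := by field_simp
      rw [e]
      exact h1
    linarith

/-- Additivity of the spectrum map on the window. -/
lemma spectrumMap_add (α γ : ℝ) (hα : 0 < α) (hγ0 : 0 < γ) (hγ1 : γ < 1)
    (δ : ℝ) (hδ0 : 0 < δ) (h2δγ : 2*δ ≤ γ) (h2δγ' : 2*δ ≤ 1 - γ)
    (b₁ b₂ : ℕ) (h₁ : b₁ ∈ Wset α γ δ) (h₂ : b₂ ∈ Wset α γ δ) :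
    spectrumMap α γ (b₁ + b₂) = spectrumMap α γ b₁ + spectrumMap α γ b₂ := by
  set ρ₁ := Int.fract (α * b₁ + γ) with hρ₁
  set ρ₂ := Int.fract (α * b₂ + γ) with hρ₂
  obtain ⟨h₁l, h₁u⟩ := h₁
  obtain ⟨h₂l, h₂u⟩ := h₂
  have key : Int.fract (α * (b₁ + b₂ : ℕ) + γ) = ρ₁ + ρ₂ - γ := by
    have hsplit : α * ((b₁ + b₂ : ℕ) : ℝ) + γ
        = ((⌊α * b₁ + γ⌋ + ⌊α * b₂ + γ⌋ : ℤ) : ℝ) + (ρ₁ + ρ₂ - γ) := by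
      have e1 := Int.floor_add_fract (α * b₁ + γ)
      have e2 := Int.floor_add_fract (α * b₂ + γ)
      push_cast
      linarith
    rw [hsplit, Int.fract_intCast_add, Int.fract_eq_self.2 ⟨by linarith, by linarith⟩]
  have : (spectrumMap α γ (b₁ + b₂) : ℝ)
      = (spectrumMap α γ b₁ : ℝ) + (spectrumMap α γ b₂ : ℝ) := by
    rw [spectrumMap_real α γ hα hγ0, spectrumMap_real α γ hα hγ0,
      spectrumMap_real α γ hα hγ0, key]
    push_cast
    ring
  exact_mod_cast this

lemma geom_tail_bound : ∀ (H : Finset ℕ), ∑ r ∈ H, ((2:ℝ))⁻¹ ^ r ≤ 2 := by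
  intro H
  obtain ⟨M, hM⟩ : ∃ M, H ⊆ Finset.range M := ⟨H.sup id + 1, fun r hr =>
    Finset.mem_range.2 (Nat.lt_succ_of_le (Finset.le_sup (f := id) hr))⟩
  calc ∑ r ∈ H, ((2:ℝ))⁻¹ ^ r ≤ ∑ r ∈ Finset.range M, ((2:ℝ))⁻¹ ^ r := by
        refine Finset.sum_le_sum_of_subset_of_nonneg hM fun i _ _ => by positivity
  _ ≤ 2 := by
      have : ∀ M : ℕ, ∑ r ∈ Finset.range M, ((2:ℝ))⁻¹ ^ r ≤ 2 - 2 * (2:ℝ)⁻¹ ^ M := by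
        intro M
        induction M with
        | zero => simp
        | succ n ih =>
          rw [Finset.sum_range_succ]
          have : (2:ℝ)⁻¹ ^ (n+1) = (2:ℝ)⁻¹ ^ n * 2⁻¹ := by ring
          nlinarith [pow_nonneg (by norm_num : (0:ℝ) ≤ 2⁻¹) n]
      have h := this M
      nlinarith [pow_nonneg (by norm_num : (0:ℝ) ≤ 2⁻¹) M]

set_option maxHeartbeats 1000000 in
lemma jtrans (α γ : ℝ) (hα : 0 < α) (hγ0 : 0 < γ) (hγ1 : γ < 1)
    (δ : ℝ) (hδ0 : 0 < δ) (hδ4 : δ < 1/4)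
    (C B : Set ℕ) (hBW : B ⊆ Wset α γ δ)
    (hBC : ∀ b ∈ B, spectrumMap α γ b ∈ C) (hBJ : JSet B) : JSet C := by
  classical
  intro F hF
  set β := α⁻¹ with hβdef
  have hβ : 0 < β := by positivity
  have hαβ : α * β = 1 := mul_inv_cancel₀ (ne_of_gt hα)
  -- fractional parts of scaled partial sums
  set σ : (ℕ → ℕ) → ℕ → ℝ := fun f m => Int.fract (β * ∑ n ∈ Finset.range m, f n) with hσdef
  set u : Ultrafilter ℕ := @Filter.hyperfilter ℕ _ with hudef
  -- ultrafilter limits of the fractional parts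
  have hL : ∀ f : ℕ → ℕ, ∃ L : ℝ, Filter.Tendsto (σ f) u (nhds L) := by
    intro f
    have hc : ↑(u.map (σ f)) ≤ Filter.principal (Set.Icc (0:ℝ) 1) := by
      rw [Filter.le_principal_iff]
      refine Ultrafilter.mem_map.2 ?_
      have : (σ f) ⁻¹' (Set.Icc (0:ℝ) 1) = Set.univ := by
        refine Set.eq_univ_of_forall fun x => ?_
        exact ⟨Int.fract_nonneg _, le_of_lt (Int.fract_lt_one _)⟩
      rw [this]
      exact Filter.univ_mem
    obtain ⟨L, _, hL⟩ := isCompact_Icc.ultrafilter_le_nhds (u.map (σ f)) hc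
    exact ⟨L, hL⟩
  choose L hLt using hL
  set ε : ℕ → ℝ := fun r => min (β*δ) 1 / 2^(r+3) with hεdef
  have hmin0 : 0 < min (β*δ) 1 := lt_min (by positivity) one_pos
  have hε0 : ∀ r, 0 < ε r := fun r => div_pos hmin0 (by positivity)
  have hεmono : ∀ r, ε (r+1) ≤ ε r := by
    intro r
    apply div_le_div_of_nonneg_left (le_of_lt hmin0) (by positivity)
    exact pow_le_pow_right₀ (by norm_num) (by omega)
  have hεsmall : ∀ r, ε r ≤ 1/8 := by
    intro r
    have h1 : min (β*δ) 1 ≤ 1 := min_le_right _ _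
    have h2 : (8:ℝ) ≤ 2^(r+3) := by
      calc (8:ℝ) = 2^3 := by norm_num
      _ ≤ 2^(r+3) := pow_le_pow_right₀ (by norm_num) (by omega)
    rw [div_le_div_iff₀ (by positivity) (by norm_num)]
    nlinarith
  have hεβδ : ∀ r, ε r ≤ β*δ/2^(r+3) := by
    intro r
    simp only [hεdef]
    gcongr
    exact min_le_left _ _
  -- large sets of good indices
  have hT : ∀ r : ℕ, {m | ∀ f ∈ F, |σ f m - L f| < ε r} ∈ u := by
    intro r
    have he : {m | ∀ f ∈ F, |σ f m - L f| < ε r} = ⋂ f ∈ F, {m | |σ f m - L f| < ε r} := by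
      ext x; simp
    rw [he]
    refine (Filter.biInter_finset_mem F).2 fun f _ => ?_
    have h := (hLt f) (Metric.ball_mem_nhds (L f) (hε0 r))
    exact u.toFilter.mem_of_superset h (fun m hm => by simpa [Metric.mem_ball, Real.dist_eq] using hm)
  -- select a strictly increasing sequence of good indices
  have hsel : ∀ (r b : ℕ), ∃ c, (∀ f ∈ F, |σ f c - L f| < ε r) ∧ b < c := by
    intro r b
    have hinf : {m | ∀ f ∈ F, |σ f m - L f| < ε r}.Infinite := by
      by_contra h
      rw [Set.not_infinite] at h
      exact Set.Finite.notMem_hyperfilter h (hT r)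
    obtain ⟨c, hc1, hc2⟩ := hinf.exists_gt b
    exact ⟨c, hc1, hc2⟩
  choose sel hsel1 hsel2 using hsel
  set m : ℕ → ℕ := fun r => Nat.rec (sel 0 0) (fun r' prev => sel (r'+1) prev) r with hmdef
  have hm0 : ∀ r, ∀ f ∈ F, |σ f (m r) - L f| < ε r := by
    intro r
    cases r with
    | zero => exact hsel1 0 0
    | succ r' => exact hsel1 (r'+1) (m r')
  have hmlt : ∀ r, m r < m (r+1) := fun r => hsel2 (r+1) (m r)
  have hmono : StrictMono m := strictMono_nat_of_lt_succ hmlt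
  -- block sums and their near-integer multiples of α
  set w : (ℕ → ℕ) → ℕ → ℕ := fun f r => ∑ n ∈ Finset.Ico (m r) (m (r+1)), f n with hwdef
  set Nint : (ℕ → ℕ) → ℕ → ℤ := fun f r =>
    ⌊β * ∑ n ∈ Finset.range (m (r+1)), f n⌋ - ⌊β * ∑ n ∈ Finset.range (m r), f n⌋ with hNdef
  have happrox : ∀ f ∈ F, ∀ r, |β * (w f r : ℝ) - (Nint f r : ℝ)| < 2 * ε r := by
    intro f hf r
    have hsum : (∑ n ∈ Finset.range (m r), f n) + ∑ n ∈ Finset.Ico (m r) (m (r+1)), f n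
        = ∑ n ∈ Finset.range (m (r+1)), f n := by
      simp only [Finset.range_eq_Ico]
      exact Finset.sum_Ico_consecutive f (Nat.zero_le _) (le_of_lt (hmlt r))
    have e1 := Int.floor_add_fract (β * (∑ n ∈ Finset.range (m (r+1)), f n : ℕ))
    have e2 := Int.floor_add_fract (β * (∑ n ∈ Finset.range (m r), f n : ℕ))
    have key : β * (w f r : ℝ) - (Nint f r : ℝ) = σ f (m (r+1)) - σ f (m r) := by
      have hsumR : ((∑ n ∈ Finset.range (m r), f n : ℕ) : ℝ)
          + ((∑ n ∈ Finset.Ico (m r) (m (r+1)), f n : ℕ) : ℝ)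
          = ((∑ n ∈ Finset.range (m (r+1)), f n : ℕ):ℝ) := by exact_mod_cast hsum
      show β * ((∑ n ∈ Finset.Ico (m r) (m (r+1)), f n : ℕ) : ℝ)
          - ((⌊β * ((∑ n ∈ Finset.range (m (r+1)), f n : ℕ) : ℝ)⌋
              - ⌊β * ((∑ n ∈ Finset.range (m r), f n : ℕ) : ℝ)⌋ : ℤ) : ℝ)
          = Int.fract (β * ((∑ n ∈ Finset.range (m (r+1)), f n : ℕ) : ℝ))
            - Int.fract (β * ((∑ n ∈ Finset.range (m r), f n : ℕ) : ℝ))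
      push_cast at e1 e2 hsumR ⊢
      linear_combination β * hsumR - e1 + e2
    rw [key]
    have b1 := hm0 (r+1) f hf
    have b2 := hm0 r f hf
    have h3 : |σ f (m (r+1)) - σ f (m r)|
        ≤ |σ f (m (r+1)) - L f| + |L f - σ f (m r)| := abs_sub_le _ _ _
    rw [abs_sub_comm (L f)] at h3
    have := hεmono r
    calc |σ f (m (r+1)) - σ f (m r)| ≤ _ + _ := h3
    _ < ε (r+1) + ε r := by exact add_lt_add b1 b2
    _ ≤ 2 * ε r := by linarith
  have hNnonneg : ∀ f ∈ F, ∀ r, 0 ≤ Nint f r := by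
    intro f hf r
    have h := abs_lt.1 (happrox f hf r)
    have hw0 : 0 ≤ β * ((w f r : ℕ) : ℝ) := by positivity
    have hε8 := hεsmall r
    have hgt : (-1:ℝ) < (Nint f r : ℝ) := by linarith
    have : (-1:ℤ) < Nint f r := by exact_mod_cast hgt
    omega
  set K : ℕ := ⌈β⌉₊ + 1 with hKdef
  have hK1 : 1 ≤ α * (K:ℝ) := by
    have h1 : β ≤ (K:ℝ) := by
      calc β ≤ (⌈β⌉₊ : ℝ) := Nat.le_ceil β
      _ ≤ (K:ℝ) := by rw [hKdef]; push_cast; linarith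
    nlinarith
  -- apply the J-set property of B to the pulled-back sequences
  set F' : Finset (ℕ → ℕ) := F.image (fun f => fun r => (Nint f r).toNat + K) with hF'def
  obtain ⟨a', H, hH, hmem⟩ := hBJ F' (hF.image _)
  set b : (ℕ → ℕ) → ℕ := fun f => a' + ∑ r ∈ H, ((Nint f r).toNat + K) with hbdef
  have hbB : ∀ f ∈ F, b f ∈ B := fun f hf => hmem _ (Finset.mem_image_of_mem _ hf)
  set H' : Finset ℕ := H.biUnion (fun r => Finset.Ico (m r) (m (r+1))) with hH'def
  have hH'ne : H'.Nonempty := by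
    obtain ⟨r, hr⟩ := hH
    exact ⟨m r, Finset.mem_biUnion.2 ⟨r, hr, Finset.mem_Ico.2 ⟨le_refl _, hmlt r⟩⟩⟩
  have hsumH' : ∀ f : ℕ → ℕ, ∑ n ∈ H', f n = ∑ r ∈ H, w f r := by
    intro f
    rw [hH'def]
    refine Finset.sum_biUnion ?_
    intro r _ s _ hrs
    refine Finset.disjoint_left.2 fun n hn hn' => ?_
    rw [Finset.mem_Ico] at hn hn'
    rcases lt_or_gt_of_ne hrs with h | h
    · have : m (r+1) ≤ m s := hmono.monotone (show r+1 ≤ s by omega)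
      omega
    · have : m (s+1) ≤ m r := hmono.monotone (show s+1 ≤ r by omega)
      omega
  -- the common shift
  set ρ : (ℕ → ℕ) → ℝ := fun f => Int.fract (α * (b f) + γ) with hρdef
  set E : (ℕ → ℕ) → ℝ := fun f => ∑ r ∈ H, ((w f r : ℝ) - α * (Nint f r : ℝ)) with hEdef
  set af : (ℕ → ℕ) → ℤ := fun f => (spectrumMap α γ (b f) : ℤ) - (∑ n ∈ H', f n : ℤ) with hafdef
  have hkey : ∀ f ∈ F, (af f : ℝ)
      = α * a' + α * K * H.card + γ - ρ f - E f := by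
    intro f hf
    have h1 : (af f : ℝ) = (spectrumMap α γ (b f) : ℝ) - ((∑ n ∈ H', f n : ℕ) : ℝ) := by
      simp only [hafdef]; push_cast; ring
    rw [h1, spectrumMap_real α γ hα hγ0]
    have h2 : α * ((b f : ℕ) : ℝ)
        = α * a' + α * K * H.card + ∑ r ∈ H, α * ((Nint f r : ℤ) : ℝ) := by
      simp only [hbdef]
      push_cast
      rw [Finset.sum_add_distrib, Finset.sum_const, nsmul_eq_mul, ← Finset.mul_sum]
      have h4 : (∑ r ∈ H, ((Nint f r).toNat : ℝ)) = ∑ r ∈ H, ((Nint f r : ℤ) : ℝ) :=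
        Finset.sum_congr rfl fun r _ => by
          exact_mod_cast congrArg (fun z : ℤ => (z : ℝ)) (Int.toNat_of_nonneg (hNnonneg f hf r))
      rw [h4]
      ring
    have h3 : ((∑ n ∈ H', f n : ℕ) : ℝ) = ∑ r ∈ H, ((w f r : ℕ) : ℝ) := by
      exact_mod_cast hsumH' f
    simp only [hρdef, hEdef]
    rw [Finset.sum_sub_distrib, h3]
    linear_combination h2
  -- bound on the error term
  have hEbound : ∀ f ∈ F, |E f| ≤ δ/2 := by
    intro f hf
    have hterm : ∀ r ∈ H, |(w f r : ℝ) - α * (Nint f r : ℝ)| ≤ δ * ((2:ℝ))⁻¹ ^ r / 4 := by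
      intro r _
      have h1 : (w f r : ℝ) - α * (Nint f r : ℝ)
          = α * (β * (w f r : ℝ) - (Nint f r : ℝ)) := by
        have : α * (β * (w f r : ℝ)) = (w f r : ℝ) := by
          rw [← mul_assoc, hαβ, one_mul]
        rw [mul_sub, this]
      rw [h1, abs_mul, abs_of_pos hα]
      have h2 := le_of_lt (happrox f hf r)
      have h3 : 2 * ε r ≤ 2 * (β*δ/2^(r+3)) := by linarith [hεβδ r]
      have h4 : α * |β * (w f r : ℝ) - (Nint f r : ℝ)| ≤ α * (2 * (β*δ/2^(r+3))) := by
        have := le_trans h2 h3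
        nlinarith [abs_nonneg (β * (w f r : ℝ) - (Nint f r : ℝ))]
      refine le_trans h4 (le_of_eq ?_)
      have h5 : (2:ℝ)^(r+3) = 8 * 2^r := by rw [pow_add]; ring
      have h6 : ((2:ℝ))⁻¹ ^ r = ((2:ℝ)^r)⁻¹ := by rw [inv_pow]
      have h2r : (0:ℝ) < 2^r := pow_pos (by norm_num) r
      calc α * (2 * (β*δ/2^(r+3))) = (α*β) * (2*δ/2^(r+3)) := by ring
      _ = 2*δ/2^(r+3) := by rw [hαβ, one_mul]
      _ = δ * ((2:ℝ))⁻¹^r/4 := by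
          rw [h5, h6]
          field_simp
          ring
    calc |E f| ≤ ∑ r ∈ H, |(w f r : ℝ) - α * (Nint f r : ℝ)| := by
          simp only [hEdef]
          exact Finset.abs_sum_le_sum_abs _ _
    _ ≤ ∑ r ∈ H, δ * ((2:ℝ))⁻¹ ^ r / 4 := Finset.sum_le_sum hterm
    _ = (δ/4) * ∑ r ∈ H, ((2:ℝ))⁻¹ ^ r := by rw [Finset.mul_sum]; exact Finset.sum_congr rfl fun r _ => by ring
    _ ≤ (δ/4) * 2 := by
          have := geom_tail_bound H
          nlinarith
    _ = δ/2 := by ring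
  have hρbound : ∀ f ∈ F, γ - δ ≤ ρ f ∧ ρ f < γ + δ := fun f hf => hBW (hbB f hf)
  obtain ⟨f₀, hf₀⟩ := hF
  have haf_eq : ∀ f ∈ F, af f = af f₀ := by
    intro f hf
    have h1 := hkey f hf
    have h2 := hkey f₀ hf₀
    have e1 := abs_le.1 (hEbound f hf)
    have e2 := abs_le.1 (hEbound f₀ hf₀)
    have r1 := hρbound f hf
    have r2 := hρbound f₀ hf₀
    have hR : |(af f : ℝ) - (af f₀ : ℝ)| < 1 := by
      rw [h1, h2]
      rw [abs_lt]
      constructor <;> [skip; skip] <;>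
        · obtain ⟨r1l, r1u⟩ := r1; obtain ⟨r2l, r2u⟩ := r2
          obtain ⟨e1l, e1u⟩ := e1; obtain ⟨e2l, e2u⟩ := e2
          linarith
    have hZ : |af f - af f₀| < 1 := by
      have : ((|af f - af f₀| : ℤ) : ℝ) < 1 := by
        rw [Int.cast_abs]
        push_cast
        exact hR
      exact_mod_cast this
    have := Int.abs_lt_one_iff.1 hZ
    omega
  have haf_pos : 0 ≤ af f₀ := by
    have h2 := hkey f₀ hf₀
    have e2 := abs_le.1 (hEbound f₀ hf₀)
    have r2 := hρbound f₀ hf₀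
    have hcard : 1 ≤ (H.card : ℝ) := by
      have : 0 < H.card := Finset.card_pos.2 hH
      exact_mod_cast this
    have ha'0 : 0 ≤ α * ((a' : ℕ) : ℝ) := by positivity
    have hKc : (1:ℝ) ≤ α * K * H.card := by nlinarith [hK1, hcard]
    have hpos : (0:ℝ) < (af f₀ : ℝ) := by
      rw [h2]
      obtain ⟨r2l, r2u⟩ := r2
      obtain ⟨e2l, e2u⟩ := e2
      linarith
    exact_mod_cast le_of_lt hpos
  refine ⟨(af f₀).toNat, H', hH'ne, ?_⟩
  intro f hf
  have h1 : ((af f₀).toNat + ∑ n ∈ H', f n : ℕ) = spectrumMap α γ (b f) := by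
    have ht : ((af f₀).toNat : ℤ) = af f := by
      rw [Int.toNat_of_nonneg haf_pos, haf_eq f hf]
    have h2 : (((af f₀).toNat + ∑ n ∈ H', f n : ℕ) : ℤ)
        = (spectrumMap α γ (b f) : ℤ) := by
      push_cast [ht]
      simp only [hafdef]
      push_cast
      ring
    exact_mod_cast h2
  rw [h1]
  exact hBC _ (hbB f hf)

theorem spectra_of_C_sets (α γ : ℝ) (hα : 0 < α) (hγ0 : 0 < γ) (hγ1 : γ < 1)
    (A : Set ℕ) (hA : CSet A) :
    CSet (spectrumMap α γ '' A) := by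
  obtain ⟨p, hp, hpJ, hpA⟩ := hA
  set δ : ℝ := min γ (1-γ) / 4 with hδdef
  have hmin1 : min γ (1-γ) ≤ γ := min_le_left _ _
  have hmin2 : min γ (1-γ) ≤ 1 - γ := min_le_right _ _
  have hmin0 : 0 < min γ (1-γ) := lt_min hγ0 (by linarith)
  have hδ0 : 0 < δ := by positivity
  have hδγ : δ ≤ γ := by rw [hδdef]; linarith
  have hδγ' : δ ≤ 1 - γ := by rw [hδdef]; linarith
  have h2δγ : 2*δ ≤ γ := by rw [hδdef]; linarith
  have h2δγ' : 2*δ ≤ 1-γ := by rw [hδdef]; linarith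
  have hδ4 : δ < 1/4 := by
    rw [hδdef]
    have : min γ (1-γ) < 1 := lt_of_le_of_lt hmin1 hγ1
    linarith
  have hW := Wset_mem α γ hα hγ0 hγ1 p hp δ hδ0 hδγ hδγ'
  set g : ℕ → ℕ := spectrumMap α γ with hgdef
  refine ⟨p.map g, ?_, ?_, ?_⟩
  · -- idempotency of the image ultrafilter
    have hle : (↑(usum (p.map g) (p.map g)) : Filter ℕ) ≤ ↑(p.map g) := by
      rw [Filter.le_def]
      intro S hS
      have hSp : g ⁻¹' S ∈ p := hS
      have hG : (g ⁻¹' S) ∩ Wset α γ δ ∈ p := Filter.inter_mem hSp hW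
      have hstar := star_mem hp hG
      show {x | {y | x + y ∈ S} ∈ p.map g} ∈ p.map g
      refine Ultrafilter.mem_map.2 ?_
      refine p.toFilter.mem_of_superset (Filter.inter_mem hstar hW) ?_
      rintro x ⟨hx1, hx2⟩
      show {y | g x + y ∈ S} ∈ p.map g
      refine Ultrafilter.mem_map.2 ?_
      refine p.toFilter.mem_of_superset (Filter.inter_mem hx1 hW) ?_
      rintro n ⟨hn1, hn2⟩
      show g x + g n ∈ S
      have hadd : g (x + n) = g x + g n :=
        spectrumMap_add α γ hα hγ0 hγ1 δ hδ0 h2δγ h2δγ' x n hx2 hn2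
      rw [← hadd]
      exact hn1.1
    exact Ultrafilter.coe_injective (Ultrafilter.unique _ hle)
  · -- every member is a J-set
    intro C hC
    have hCp : g ⁻¹' C ∈ p := hC
    refine jtrans α γ hα hγ0 hγ1 δ hδ0 hδ4 C ((g ⁻¹' C) ∩ Wset α γ δ)
      Set.inter_subset_right (fun b hb => hb.1) (hpJ _ (Filter.inter_mem hCp hW))
  · -- the image set is a member
    refine Ultrafilter.mem_map.2 ?_
    exact p.toFilter.mem_of_superset hpA (Set.subset_preimage_image g A)
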